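/- Let (A,0) be a gr-field (a graded division ring with zero differential) and let (B,d) be a graded commutative acyclic dg-division algebra. Suppose A→B is a dg-extension. If B has characteristic different from 2, then this extension is not dg-separable. -/

import Mathlib

open scoped TensorProduct

section DGCore

variable {A : Type} [Ring A] {B : Type} [Ring B]

/-- `(A, d)` together with the grading `𝒜` is a differential graded ring:
`d` is a square-zero additive endomorphism of degree `1` satisfying the graded
Leibniz rule. -/
structure IsDGRing (𝒜 : ℤ → AddSubgroup A) (d : A →+ A) : Prop where
  d_sq : ∀ x, d (d x) = 0
  d_mem : ∀ (i : ℤ), ∀ x ∈ 𝒜 i, d x ∈ 𝒜 (i + 1)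
  leibniz : ∀ (i : ℤ) (a b : A), a ∈ 𝒜 i →
    d (a * b) = d a * b + ((Int.negOnePow i : ℤ)) • (a * d b)

/-- A homomorphism of differential graded rings (a dg-extension). -/
structure IsDGHom (𝒜 : ℤ → AddSubgroup A) (dA : A →+ A)
    (𝒝 : ℤ → AddSubgroup B) (dB : B →+ B) (φ : A →+* B) : Prop where
  map_mem : ∀ (i : ℤ), ∀ x ∈ 𝒜 i, φ x ∈ 𝒝 i
  map_d : ∀ x, φ (dA x) = dB (φ x)

/-- Graded commutativity: `a * b = (-1)^{|a||b|} b * a` for homogeneous elements. -/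
def IsGradedComm (𝒜 : ℤ → AddSubgroup A) : Prop :=
  ∀ (i j : ℤ) (a b : A), a ∈ 𝒜 i → b ∈ 𝒜 j →
    a * b = ((Int.negOnePow (i * j) : ℤ)) • (b * a)

/-- A dg-ring is acyclic if its homology vanishes, i.e. every cycle is a boundary. -/
def IsAcyclic (d : A →+ A) : Prop := ∀ x, d x = 0 → ∃ y, d y = x

/-- A dg left ideal: a graded additive subgroup closed under the differential and
under left multiplication. -/
def IsDGLeftIdeal (𝒜 : ℤ → AddSubgroup A) [GradedRing 𝒜] (d : A →+ A)
    (I : AddSubgroup A) : Prop :=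
  (∀ (a : A), ∀ x ∈ I, a * x ∈ I) ∧ (∀ x ∈ I, d x ∈ I) ∧
    (∀ x ∈ I, ∀ i : ℤ, (DirectSum.decompose 𝒜 x i : A) ∈ I)

/-- A dg right ideal. -/
def IsDGRightIdeal (𝒜 : ℤ → AddSubgroup A) [GradedRing 𝒜] (d : A →+ A)
    (I : AddSubgroup A) : Prop :=
  (∀ (a : A), ∀ x ∈ I, x * a ∈ I) ∧ (∀ x ∈ I, d x ∈ I) ∧
    (∀ x ∈ I, ∀ i : ℤ, (DirectSum.decompose 𝒜 x i : A) ∈ I)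

/-- A dg-division ring: the only dg left ideals and the only dg right ideals
are `0` and the whole ring. -/
def IsDGDivisionRing (𝒜 : ℤ → AddSubgroup A) [GradedRing 𝒜] (d : A →+ A) : Prop :=
  (0 : A) ≠ 1 ∧ (∀ I, IsDGLeftIdeal 𝒜 d I → I = ⊥ ∨ I = ⊤) ∧
    (∀ I, IsDGRightIdeal 𝒜 d I → I = ⊥ ∨ I = ⊤)

/-- A graded division ring (gr-field): every nonzero homogeneous element is invertible. -/
def IsGradedDivisionRing (𝒜 : ℤ → AddSubgroup A) : Prop :=
  (0 : A) ≠ 1 ∧ ∀ (i : ℤ) (x : A), x ∈ 𝒜 i → x ≠ 0 → IsUnit x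

/-- The relations defining `B ⊗[A] B` inside `B ⊗[ℤ] B`, for an extension `φ : A →+* B`. -/
def sepRel (φ : A →+* B) : Submodule ℤ (B ⊗[ℤ] B) :=
  Submodule.span ℤ {x | ∃ (b b' : B) (a : A),
    x = (b * φ a) ⊗ₜ[ℤ] b' - b ⊗ₜ[ℤ] (φ a * b')}

/-- The balanced tensor product `B ⊗[A] B` for an extension `φ : A →+* B`. -/
abbrev SepTensor (φ : A →+* B) := (B ⊗[ℤ] B) ⧸ sepRel φ

/-- The canonical projection `B ⊗[ℤ] B → B ⊗[A] B`. -/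
noncomputable def sepMk (φ : A →+* B) : B ⊗[ℤ] B →ₗ[ℤ] SepTensor φ := (sepRel φ).mkQ

/-- The multiplication map `μ : B ⊗[A] B → B`. -/
noncomputable def sepMul (φ : A →+* B) : SepTensor φ →ₗ[ℤ] B :=
  Submodule.liftQ _ (TensorProduct.lift (LinearMap.mul ℤ B)) (by
    rw [sepRel, Submodule.span_le]
    rintro x ⟨b, b', a, rfl⟩
    change TensorProduct.lift (LinearMap.mul ℤ B) ((b * φ a) ⊗ₜ[ℤ] b' - b ⊗ₜ[ℤ] (φ a * b')) = 0
    simp [mul_assoc])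

/-- Left multiplication by `b` on `B ⊗[A] B`. -/
noncomputable def sepLMul (φ : A →+* B) (b : B) : SepTensor φ →ₗ[ℤ] SepTensor φ :=
  Submodule.mapQ _ _ (TensorProduct.map (LinearMap.mulLeft ℤ b) LinearMap.id) (by
    rw [sepRel, Submodule.span_le]
    rintro x ⟨b₀, b', a, rfl⟩
    change TensorProduct.map (LinearMap.mulLeft ℤ b) LinearMap.id
      ((b₀ * φ a) ⊗ₜ[ℤ] b' - b₀ ⊗ₜ[ℤ] (φ a * b')) ∈ sepRel φ
    simp only [map_sub, TensorProduct.map_tmul, LinearMap.mulLeft_apply, LinearMap.id_apply]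
    exact Submodule.subset_span ⟨b * b₀, b', a, by simp [mul_assoc]⟩)

/-- Right multiplication by `b` on `B ⊗[A] B`. -/
noncomputable def sepRMul (φ : A →+* B) (b : B) : SepTensor φ →ₗ[ℤ] SepTensor φ :=
  Submodule.mapQ _ _ (TensorProduct.map LinearMap.id (LinearMap.mulRight ℤ b)) (by
    rw [sepRel, Submodule.span_le]
    rintro x ⟨b₀, b', a, rfl⟩
    change TensorProduct.map LinearMap.id (LinearMap.mulRight ℤ b)
      ((b₀ * φ a) ⊗ₜ[ℤ] b' - b₀ ⊗ₜ[ℤ] (φ a * b')) ∈ sepRel φ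
    simp only [map_sub, TensorProduct.map_tmul, LinearMap.mulRight_apply, LinearMap.id_apply]
    exact Submodule.subset_span ⟨b₀, b' * b, a, by simp [mul_assoc]⟩)

/-- The grading on `B ⊗[A] B`: the degree `n` part is generated by the classes of
`b ⊗ b'` with `b, b'` homogeneous of degrees summing to `n`. -/
noncomputable def sepGrading (φ : A →+* B) (𝒝 : ℤ → AddSubgroup B) (n : ℤ) :
    AddSubgroup (SepTensor φ) :=
  AddSubgroup.closure {x | ∃ (i j : ℤ) (b b' : B), b ∈ 𝒝 i ∧ b' ∈ 𝒝 j ∧ i + j = n ∧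
    x = sepMk φ (b ⊗ₜ[ℤ] b')}

/-- The sign involution `b ↦ (-1)^{|b|} b` of a graded ring. -/
noncomputable def signMap (𝒝 : ℤ → AddSubgroup B) [GradedRing 𝒝] : B →+ B :=
  (DirectSum.toAddMonoid fun i =>
      (smulAddHom ℤ B ((Int.negOnePow i : ℤ))).comp (𝒝 i).subtype).comp
    (DirectSum.decomposeAddEquiv 𝒝).toAddMonoidHom

lemma signMap_of_mem (𝒝 : ℤ → AddSubgroup B) [GradedRing 𝒝] {i : ℤ} {x : B}
    (hx : x ∈ 𝒝 i) : signMap 𝒝 x = ((Int.negOnePow i : ℤ)) • x := by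
  classical
  unfold signMap
  simp only [AddMonoidHom.comp_apply, AddEquiv.coe_toAddMonoidHom,
    DirectSum.decomposeAddEquiv_apply, DirectSum.decompose_of_mem 𝒝 hx,
    DirectSum.toAddMonoid_of]
  rfl

/-- The differential `d ⊗ 1 + ε ⊗ d` on `B ⊗[ℤ] B` (with Koszul sign). -/
noncomputable def sepDiffPre (𝒝 : ℤ → AddSubgroup B) [GradedRing 𝒝] (dB : B →+ B) :
    B ⊗[ℤ] B →ₗ[ℤ] B ⊗[ℤ] B :=
  TensorProduct.map dB.toIntLinearMap LinearMap.id +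
    TensorProduct.map (signMap 𝒝).toIntLinearMap dB.toIntLinearMap

/-- `D` is the differential induced on `B ⊗[A] B` by `d_B ⊗ 1 + ε ⊗ d_B`. -/
def IsSepDiff (φ : A →+* B) (𝒝 : ℤ → AddSubgroup B) [GradedRing 𝒝] (dB : B →+ B)
    (D : SepTensor φ →+ SepTensor φ) : Prop :=
  ∀ x : B ⊗[ℤ] B, D (sepMk φ x) = sepMk φ (sepDiffPre 𝒝 dB x)

/-- `ρ : B → B ⊗[A] B` is a `B`-`B`-bimodule section of the multiplication map. -/
def IsSepSection (φ : A →+* B) (ρ : B →+ SepTensor φ) : Prop :=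
  (∀ b, sepMul φ (ρ b) = b) ∧
    (∀ (b₁ c b₂ : B), ρ (b₁ * c * b₂) = sepLMul φ b₁ (sepRMul φ b₂ (ρ c)))

/-- The extension `φ : A →+* B` is separable: the multiplication map
`B ⊗[A] B → B` splits as a bimodule map. -/
def IsSeparableExt (φ : A →+* B) : Prop := ∃ ρ : B →+ SepTensor φ, IsSepSection φ ρ

/-- The extension `φ : A →+* B` of graded rings is graded-separable: the multiplication
map `B ⊗[A] B → B` splits as a map of graded bimodules. -/
def IsGrSeparable (φ : A →+* B) (𝒝 : ℤ → AddSubgroup B) : Prop :=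
  ∃ ρ : B →+ SepTensor φ, IsSepSection φ ρ ∧
    ∀ (n : ℤ), ∀ b ∈ 𝒝 n, ρ b ∈ sepGrading φ 𝒝 n

/-- The dg-extension `φ : (A,d_A) →  (B,d_B)` is dg-separable: the multiplication map
`B ⊗[A] B → B` splits as a map of differential graded bimodules. -/
def IsDGSeparable (φ : A →+* B) (𝒝 : ℤ → AddSubgroup B) [GradedRing 𝒝]
    (dB : B →+ B) : Prop :=
  ∃ D : SepTensor φ →+ SepTensor φ, IsSepDiff φ 𝒝 dB D ∧
    ∃ ρ : B →+ SepTensor φ, IsSepSection φ ρ ∧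
      (∀ (n : ℤ), ∀ b ∈ 𝒝 n, ρ b ∈ sepGrading φ 𝒝 n) ∧
      (∀ b, D (ρ b) = ρ (dB b))

end DGCore

section AuxProof

variable {A : Type} [Ring A] {B : Type} [Ring B]

private lemma d_mul_cycle (𝒝 : ℤ → AddSubgroup B) [GradedRing 𝒝] (dB : B →+ B)
    (hB : IsDGRing 𝒝 dB) (b x : B) (hx : dB x = 0) : dB (b * x) = dB b * x := by
  classical
  have key : ∀ (i : ℤ) (c : B), c ∈ 𝒝 i → dB (c * x) = dB c * x := by
    intro i c hc
    rw [hB.leibniz i c x hc, hx, mul_zero, smul_zero, add_zero]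
  calc dB (b * x)
      = dB ((∑ i ∈ (DirectSum.decompose 𝒝 b).support,
          ((DirectSum.decompose 𝒝 b) i : B)) * x) := by
        rw [DirectSum.sum_support_decompose]
    _ = ∑ i ∈ (DirectSum.decompose 𝒝 b).support,
          dB (((DirectSum.decompose 𝒝 b) i : B) * x) := by
        rw [Finset.sum_mul, map_sum]
    _ = ∑ i ∈ (DirectSum.decompose 𝒝 b).support,
          dB ((DirectSum.decompose 𝒝 b) i : B) * x :=
        Finset.sum_congr rfl fun i _ => key i _ (SetLike.coe_mem _)
    _ = dB b * x := by
        rw [← Finset.sum_mul, ← map_sum, DirectSum.sum_support_decompose]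

/-- The map `b ⊗ b' ↦ dB b * b'` descends to `B ⊗[A] B` when `dB ∘ φ = 0`. -/
private noncomputable def Gmap (dB : B →+ B) (φ : A →+* B)
    (hker : ∀ (b : B) (a : A), dB (b * φ a) = dB b * φ a) :
    SepTensor φ →ₗ[ℤ] B :=
  Submodule.liftQ _ (TensorProduct.lift ((LinearMap.mul ℤ B).comp dB.toIntLinearMap)) (by
    rw [sepRel, Submodule.span_le]
    rintro x ⟨b, b', a, rfl⟩
    change TensorProduct.lift ((LinearMap.mul ℤ B).comp dB.toIntLinearMap)
      ((b * φ a) ⊗ₜ[ℤ] b' - b ⊗ₜ[ℤ] (φ a * b')) = 0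
    simp only [SetLike.mem_coe, LinearMap.mem_ker, map_sub, TensorProduct.lift.tmul,
      LinearMap.coe_comp, Function.comp_apply, AddMonoidHom.coe_toIntLinearMap,
      LinearMap.mul_apply']
    rw [hker b a, mul_assoc, sub_self])

private lemma Gmap_mk (dB : B →+ B) (φ : A →+* B)
    (hker : ∀ (b : B) (a : A), dB (b * φ a) = dB b * φ a) (b b' : B) :
    Gmap dB φ hker (sepMk φ (b ⊗ₜ[ℤ] b')) = dB b * b' := by
  rfl

private lemma sepMul_mk (φ : A →+* B) (b b' : B) :
    sepMul φ (sepMk φ (b ⊗ₜ[ℤ] b')) = b * b' := by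
  rfl

private lemma sepLMul_mk (φ : A →+* B) (b b₀ b' : B) :
    sepLMul φ b (sepMk φ (b₀ ⊗ₜ[ℤ] b')) = sepMk φ ((b * b₀) ⊗ₜ[ℤ] b') := by
  rfl

private lemma sepRMul_mk (φ : A →+* B) (b b₀ b' : B) :
    sepRMul φ b (sepMk φ (b₀ ⊗ₜ[ℤ] b')) = sepMk φ (b₀ ⊗ₜ[ℤ] (b' * b)) := by
  rfl

private lemma sep_ext {φ : A →+* B} {C : Type} [AddCommGroup C]
    {f g : SepTensor φ →ₗ[ℤ] C}
    (h : ∀ b b' : B, f (sepMk φ (b ⊗ₜ[ℤ] b')) = g (sepMk φ (b ⊗ₜ[ℤ] b'))) : f = g := by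
  refine Submodule.linearMap_qext _ (TensorProduct.ext' ?_)
  intro b b'
  exact h b b'

private lemma sepLMul_one (φ : A →+* B) (X : SepTensor φ) : sepLMul φ (1 : B) X = X := by
  have : sepLMul φ (1 : B) = LinearMap.id (M := SepTensor φ) := by
    apply sep_ext
    intro b b'
    rw [sepLMul_mk, one_mul, LinearMap.id_apply]
  rw [this, LinearMap.id_apply]

private lemma sepRMul_one (φ : A →+* B) (X : SepTensor φ) : sepRMul φ (1 : B) X = X := by
  have : sepRMul φ (1 : B) = LinearMap.id (M := SepTensor φ) := by
    apply sep_ext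
    intro b b'
    rw [sepRMul_mk, mul_one, LinearMap.id_apply]
  rw [this, LinearMap.id_apply]

private lemma G_rmul (dB : B →+ B) (φ : A →+* B)
    (hker : ∀ (b : B) (a : A), dB (b * φ a) = dB b * φ a) (b : B) (X : SepTensor φ) :
    Gmap dB φ hker (sepRMul φ b X) = Gmap dB φ hker X * b := by
  have h : (Gmap dB φ hker).comp (sepRMul φ b)
      = (LinearMap.mulRight ℤ b).comp (Gmap dB φ hker) := by
    apply sep_ext
    intro b₀ b'
    simp only [LinearMap.comp_apply, LinearMap.mulRight_apply]
    rw [sepRMul_mk, Gmap_mk, Gmap_mk, mul_assoc]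
  simpa using LinearMap.congr_fun h X

private lemma G_lmul (𝒝 : ℤ → AddSubgroup B) [GradedRing 𝒝] (dB : B →+ B) (φ : A →+* B)
    (hB : IsDGRing 𝒝 dB)
    (hker : ∀ (b : B) (a : A), dB (b * φ a) = dB b * φ a)
    {j : ℤ} {b : B} (hb : b ∈ 𝒝 j) (X : SepTensor φ) :
    Gmap dB φ hker (sepLMul φ b X)
      = dB b * sepMul φ X + ((Int.negOnePow j : ℤ)) • (b * Gmap dB φ hker X) := by
  have h : (Gmap dB φ hker).comp (sepLMul φ b)
      = (LinearMap.mulLeft ℤ (dB b)).comp (sepMul φ)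
        + ((Int.negOnePow j : ℤ)) • ((LinearMap.mulLeft ℤ b).comp (Gmap dB φ hker)) := by
    apply sep_ext
    intro b₀ b'
    simp only [LinearMap.comp_apply, LinearMap.add_apply, LinearMap.smul_apply,
      LinearMap.mulLeft_apply]
    rw [sepLMul_mk, Gmap_mk, Gmap_mk, sepMul_mk, hB.leibniz j b b₀ hb, add_mul,
      mul_assoc, smul_mul_assoc, mul_assoc]
  simpa using LinearMap.congr_fun h X

end AuxProof


/-- A dg-extension from a gr-field `(A,0)` (zero differential) to a
graded commutative acyclic dg-division algebra `(B,d)` of characteristic different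
from `2` is never dg-separable. -/
theorem not_dgSeparable_of_grField_to_acyclic
    {A B : Type} [Ring A] [Ring B]
    (𝒜 : ℤ → AddSubgroup A) [GradedRing 𝒜] (𝒝 : ℤ → AddSubgroup B) [GradedRing 𝒝]
    (dB : B →+ B)
    (hAgr : IsGradedDivisionRing 𝒜)
    (hB : IsDGRing 𝒝 dB) (hBcomm : IsGradedComm 𝒝) (hBacyclic : IsAcyclic dB)
    (hBdiv : IsDGDivisionRing 𝒝 dB) (hchar : (2 : B) ≠ 0)
    (φ : A →+* B) (hφ : IsDGHom 𝒜 (0 : A →+ A) 𝒝 dB φ) :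
    ¬ IsDGSeparable φ 𝒝 dB := by
  rintro ⟨D, hD, ρ, ⟨hsplit, hbimod⟩, hgr, hρd⟩
  have hker : ∀ (b : B) (a : A), dB (b * φ a) = dB b * φ a := by
    intro b a
    have h0 : dB (φ a) = 0 := by
      have h := hφ.map_d a
      simpa using h.symm
    exact d_mul_cycle 𝒝 dB hB b _ h0
  have hμe : sepMul φ (ρ 1) = 1 := hsplit 1
  have hp1 : Gmap dB φ hker (ρ 1) ∈ 𝒝 1 := by
    have hegr : ρ 1 ∈ sepGrading φ 𝒝 0 := hgr 0 1 SetLike.GradedOne.one_mem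
    refine AddSubgroup.closure_induction ?_ ?_ ?_ ?_ hegr
    · rintro x ⟨i, j, b, b', hb, hb', hij, rfl⟩
      have h1 := SetLike.mul_mem_graded (hB.d_mem i b hb) hb'
      rw [Gmap_mk]
      rwa [show i + 1 + j = (1 : ℤ) by omega] at h1
    · rw [map_zero]; exact zero_mem _
    · intro x y _ _ hx hy; rw [map_add]; exact add_mem hx hy
    · intro x _ hx; rw [map_neg]; exact neg_mem hx
  have key : ∀ (j : ℤ), ∀ b ∈ 𝒝 j, dB b = 0 := by
    intro j b hb
    have h1 : ρ b = sepLMul φ 1 (sepRMul φ b (ρ 1)) := by simpa using hbimod 1 1 b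
    have h2 : ρ b = sepLMul φ b (sepRMul φ 1 (ρ 1)) := by simpa using hbimod b 1 1
    have e1 : Gmap dB φ hker (ρ b) = Gmap dB φ hker (ρ 1) * b := by
      rw [h1, sepLMul_one, G_rmul]
    have e2 : Gmap dB φ hker (ρ b)
        = dB b + ((Int.negOnePow j : ℤ)) • (b * Gmap dB φ hker (ρ 1)) := by
      rw [h2, sepRMul_one, G_lmul 𝒝 dB φ hB hker hb, hμe, mul_one]
    have hcommbp : b * Gmap dB φ hker (ρ 1)
        = ((Int.negOnePow (j * 1) : ℤ)) • (Gmap dB φ hker (ρ 1) * b) :=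
      hBcomm j 1 b _ hb hp1
    rw [mul_one] at hcommbp
    have hfin : Gmap dB φ hker (ρ 1) * b
        = dB b + ((Int.negOnePow j : ℤ)) •
            (((Int.negOnePow j : ℤ)) • (Gmap dB φ hker (ρ 1) * b)) := by
      rw [← hcommbp, ← e2, e1]
    rw [smul_smul, ← Units.val_mul, Int.units_mul_self, Units.val_one, one_smul] at hfin
    exact right_eq_add.mp hfin
  have hd0 : ∀ b : B, dB b = 0 := by
    intro b
    classical
    conv_lhs => rw [← DirectSum.sum_support_decompose 𝒝 b]
    rw [map_sum]
    exact Finset.sum_eq_zero fun i _ => key i _ (SetLike.coe_mem _)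
  obtain ⟨y, hy⟩ := hBacyclic 1 (hd0 1)
  rw [hd0 y] at hy
  exact hBdiv.1 hy
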